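/- Contour representation of the correlation function (formula (eq:fintbd)). Let γ > 0 and let μ be a finite complex Borel measure on ℝ supported in [γ, ∞). Define f(z) := ∫ e^{izE} dμ(E) for Im z ≥ 0. Then for every b > 0, the limit lim_{T→∞} (1/(2πi)) ∫_{−T}^{T} f(t)/(t − ib) dt exists and equals f(ib). -/

import Mathlib

open MeasureTheory Filter

/-- The integral of a complex-valued function against a finite complex Borel measure,
defined via the Jordan decompositions of the real and imaginary parts. -/
noncomputable def cmIntegral {α : Type*} [MeasurableSpace α]
    (μ : MeasureTheory.ComplexMeasure α) (f : α → ℂ) : ℂ :=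
  ((∫ t, f t ∂(MeasureTheory.ComplexMeasure.re μ).toJordanDecomposition.posPart) -
      (∫ t, f t ∂(MeasureTheory.ComplexMeasure.re μ).toJordanDecomposition.negPart)) +
    Complex.I •
      ((∫ t, f t ∂(MeasureTheory.ComplexMeasure.im μ).toJordanDecomposition.posPart) -
        (∫ t, f t ∂(MeasureTheory.ComplexMeasure.im μ).toJordanDecomposition.negPart))

section ContourRepHelpers

open Set intervalIntegral Complex Topology

namespace ContourRep

lemma ne_zero_of_im_ne (z : ℂ) (h : z.im ≠ 0) : z ≠ 0 := fun h0 => h (by rw [h0]; simp)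
lemma ne_zero_of_re_ne (z : ℂ) (h : z.re ≠ 0) : z ≠ 0 := fun h0 => h (by rw [h0]; simp)

lemma ftc_log (z₀ d : ℂ) (a₁ a₂ : ℝ)
    (h : ∀ y ∈ Set.uIcc a₁ a₂, z₀ + y * d ∈ Complex.slitPlane) :
    ∫ y in a₁..a₂, (z₀ + y * d)⁻¹ * d
      = Complex.log (z₀ + a₂ * d) - Complex.log (z₀ + a₁ * d) := by
  apply intervalIntegral.integral_eq_sub_of_hasDerivAt
  · intro y hy
    have h1 : HasDerivAt (fun z : ℂ => Complex.log (z₀ + z * d)) ((z₀ + y * d)⁻¹ * d) (y : ℂ) := by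
      have h2 : HasDerivAt (fun z : ℂ => z₀ + z * d) d (y : ℂ) := by
        simpa using ((hasDerivAt_id (y:ℂ)).mul_const d).const_add z₀
      exact (Complex.hasDerivAt_log (h y hy)).comp (y : ℂ) h2
    exact h1.comp_ofReal
  · apply ContinuousOn.intervalIntegrable
    apply ContinuousOn.mul _ continuousOn_const
    apply ContinuousOn.inv₀
    · fun_prop
    · exact fun y hy => Complex.slitPlane_ne_zero (h y hy)

lemma ftc_log' (z₀ d : ℂ) (a₁ a₂ : ℝ) (f : ℝ → ℂ) (w₁ w₂ : ℂ)
    (hf : ∀ y : ℝ, f y = d / (z₀ + y * d))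
    (hw₁ : w₁ = z₀ + a₁ * d) (hw₂ : w₂ = z₀ + a₂ * d)
    (h : ∀ y ∈ Set.uIcc a₁ a₂, z₀ + y * d ∈ Complex.slitPlane) :
    ∫ y in a₁..a₂, f y = Complex.log w₂ - Complex.log w₁ := by
  simp_rw [hf, hw₁, hw₂, div_eq_inv_mul]
  exact ftc_log z₀ d a₁ a₂ h

lemma log_sub_log_neg {z : ℂ} (hz : 0 < z.im) :
    Complex.log z - Complex.log (-z) = Real.pi * Complex.I := by
  apply Complex.ext
  · simp [Complex.log_re]
  · simp [Complex.log_im, Complex.arg_neg_eq_arg_sub_pi_of_im_pos hz]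

lemma dslope_diff (f : ℂ → ℂ) (hf : Differentiable ℂ f) (c : ℂ) :
    Differentiable ℂ (dslope f c) := by
  intro z
  rcases eq_or_ne z c with rfl | hz
  · obtain ⟨p, hp⟩ := hf.analyticAt z
    exact hp.has_fpower_series_dslope_fslope.analyticAt.differentiableAt
  · exact (differentiableAt_dslope_of_ne hz).2 (hf z)

lemma dslope_val (f : ℂ → ℂ) (c z : ℂ) (hz : z ≠ c) :
    dslope f c z = f z / (z - c) - f c / (z - c) := by
  rw [dslope_of_ne f hz, slope_def_field, sub_div]

lemma rect (f : ℂ → ℂ) (hf : Differentiable ℂ f) (T : ℝ) :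
    (∫ x in (-T)..T, f x)
      = (∫ x in (-T)..T, f (x + T * Complex.I))
        - Complex.I * (∫ y in (0:ℝ)..T, f (T + y * Complex.I))
        + Complex.I * (∫ y in (0:ℝ)..T, f (-T + y * Complex.I)) := by
  have h := Complex.integral_boundary_rect_eq_zero_of_differentiableOn f
    (Complex.ofReal (-T)) ((T : ℂ) + (T : ℂ) * Complex.I)
    (hf.differentiableOn)
  simp only [Complex.ofReal_re, Complex.ofReal_im, Complex.add_re, Complex.add_im,
    Complex.mul_re, Complex.mul_im, Complex.I_re, Complex.I_im, Complex.ofReal_neg,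
    smul_eq_mul] at h
  norm_num at h
  linear_combination h

lemma G_eq (E b T : ℝ) (hb : 0 < b) (hT : b < T) :
    (∫ t in (-T)..T, Complex.exp (Complex.I * t * E) / ((t : ℂ) - Complex.I * b))
      = 2 * Real.pi * Complex.I * Complex.exp (Complex.I * (Complex.I * b) * E)
        + ((∫ x in (-T)..T, Complex.exp (Complex.I * ((x : ℂ) + T * Complex.I) * E)
              / (((x : ℂ) + T * Complex.I) - Complex.I * b))
        - Complex.I * (∫ y in (0:ℝ)..T, Complex.exp (Complex.I * ((T : ℂ) + y * Complex.I) * E)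
              / (((T : ℂ) + y * Complex.I) - Complex.I * b))
        + Complex.I * (∫ y in (0:ℝ)..T, Complex.exp (Complex.I * (-(T : ℂ) + y * Complex.I) * E)
              / ((-(T : ℂ) + y * Complex.I) - Complex.I * b))) := by
  have hT0 : 0 < T := hb.trans hT
  set c : ℂ := Complex.I * b with hc
  have hcim : c.im = b := by simp [hc]
  have hcre : c.re = 0 := by simp [hc]
  set F : ℂ → ℂ := fun z => Complex.exp (Complex.I * z * E) with hF
  have hFd : Differentiable ℂ F := by
    rw [hF]; fun_prop
  have hFcont : Continuous F := hFd.continuous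
  have hdd := dslope_diff F hFd c
  have hrect := rect (dslope F c) hdd T
  -- non-vanishing of denominators on each segment
  have hneB : ∀ x : ℝ, (x : ℂ) ≠ c := by
    intro x hx; have := congrArg Complex.im hx; simp [hcim] at this; linarith
  have hneT : ∀ x : ℝ, (x : ℂ) + T * Complex.I ≠ c := by
    intro x hx; have := congrArg Complex.im hx; simp [hcim] at this; linarith
  have hneR : ∀ y : ℝ, (T : ℂ) + y * Complex.I ≠ c := by
    intro y hy; have := congrArg Complex.re hy; simp [hcre] at this; linarith
  have hneL : ∀ y : ℝ, -(T : ℂ) + y * Complex.I ≠ c := by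
    intro y hy; have := congrArg Complex.re hy; simp [hcre] at this; linarith
  -- decompositions of dslope integrals
  have decomp : ∀ (p : ℝ → ℂ), Continuous p → (∀ y, p y ≠ c) → ∀ a₁ a₂ : ℝ,
      (∫ y in a₁..a₂, dslope F c (p y))
        = (∫ y in a₁..a₂, Complex.exp (Complex.I * p y * E) / (p y - c))
          - Complex.exp (Complex.I * c * E) * ∫ y in a₁..a₂, 1 / (p y - c) := by
    intro p hp hpc a₁ a₂
    have hd : ∀ y, p y - c ≠ 0 := fun y => sub_ne_zero.2 (hpc y)
    have h1 : IntervalIntegrable (fun y => Complex.exp (Complex.I * p y * E) / (p y - c))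
        volume a₁ a₂ := by
      apply Continuous.intervalIntegrable
      exact Continuous.div (by fun_prop) (by fun_prop) hd
    have h2 : IntervalIntegrable
        (fun y => Complex.exp (Complex.I * c * E) * (1 / (p y - c))) volume a₁ a₂ := by
      apply Continuous.intervalIntegrable
      exact Continuous.mul continuous_const (Continuous.div continuous_const (by fun_prop) hd)
    rw [← intervalIntegral.integral_const_mul, ← intervalIntegral.integral_sub h1 h2]
    refine intervalIntegral.integral_congr fun y hy => ?_
    rw [dslope_val F c _ (hpc y), mul_one_div]
  have hB := decomp (fun x => (x : ℂ)) (by fun_prop) hneB (-T) T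
  have hTo := decomp (fun x => (x : ℂ) + T * Complex.I) (by fun_prop) hneT (-T) T
  have hR := decomp (fun y => (T : ℂ) + y * Complex.I) (by fun_prop) hneR 0 T
  have hL := decomp (fun y => -(T : ℂ) + y * Complex.I) (by fun_prop) hneL 0 T
  -- FTC evaluations of the constant pieces
  have hKB : (∫ x in (-T)..T, 1 / ((x:ℂ) - c))
      = Complex.log ((T:ℂ) - c) - Complex.log (-(T:ℂ) - c) := by
    refine ftc_log' (-c) 1 (-T) T _ _ _ (fun y => by push_cast; ring)
      (by push_cast; ring) (by push_cast; ring) (fun y hy => ?_)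
    rw [Complex.mem_slitPlane_iff]; right
    simp [hcim]
    exact hb.ne'
  have hKT : (∫ x in (-T)..T, 1 / (((x:ℂ) + T * Complex.I) - c))
      = Complex.log ((T:ℂ) + T * Complex.I - c) - Complex.log (-(T:ℂ) + T * Complex.I - c) := by
    refine ftc_log' ((T:ℂ) * Complex.I - c) 1 (-T) T _ _ _ (fun y => by push_cast; ring)
      (by push_cast; ring) (by push_cast; ring) (fun y hy => ?_)
    rw [Complex.mem_slitPlane_iff]; right
    simp [hcim]
    intro h; linarith
  have hKR : Complex.I * (∫ y in (0:ℝ)..T, 1 / (((T:ℂ) + y * Complex.I) - c))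
      = Complex.log ((T:ℂ) + T * Complex.I - c) - Complex.log ((T:ℂ) - c) := by
    rw [← intervalIntegral.integral_const_mul]
    refine ftc_log' ((T:ℂ) - c) Complex.I 0 T _ _ _ (fun y => by push_cast; ring)
      (by push_cast; ring) (by push_cast; ring) (fun y hy => ?_)
    rw [Complex.mem_slitPlane_iff]; left
    simp [hcre]
    linarith
  have hKL : Complex.I * (∫ y in (0:ℝ)..T, 1 / ((-(T:ℂ) + y * Complex.I) - c))
      = Complex.log ((T:ℂ) + c - T * Complex.I) - Complex.log ((T:ℂ) + c) := by
    rw [← intervalIntegral.integral_const_mul]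
    refine ftc_log' ((T:ℂ) + c) (-Complex.I) 0 T _ _ _ (fun y => ?_)
      (by push_cast; ring) (by push_cast; ring) (fun y hy => ?_)
    · rw [show (-(T:ℂ) + (y:ℂ) * Complex.I) - c = -(((T:ℂ) + c) + (y:ℂ) * (-Complex.I)) by ring,
        one_div, inv_neg]
      ring
    · rw [Complex.mem_slitPlane_iff]; left
      simp [hcre]
      linarith
  have hπ1 : Complex.log (-(T:ℂ) + T * Complex.I - c) - Complex.log ((T:ℂ) + c - T * Complex.I)
      = Real.pi * Complex.I := by
    rw [show (T:ℂ) + c - T * Complex.I = -(-(T:ℂ) + T * Complex.I - c) by ring]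
    apply log_sub_log_neg
    simp [hcim]; linarith
  have hπ2 : Complex.log ((T:ℂ) + c) - Complex.log (-(T:ℂ) - c) = Real.pi * Complex.I := by
    rw [show -(T:ℂ) - c = -((T:ℂ) + c) by ring]
    apply log_sub_log_neg
    simp [hcim]; linarith
  linear_combination (-1 : ℂ) * hB + hrect + hTo - Complex.I * hR + Complex.I * hL
    + Complex.exp (Complex.I * c * E) * hKB - Complex.exp (Complex.I * c * E) * hKT
    + Complex.exp (Complex.I * c * E) * hKR - Complex.exp (Complex.I * c * E) * hKL
    + Complex.exp (Complex.I * c * E) * hπ1 + Complex.exp (Complex.I * c * E) * hπ2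


lemma vert_bound (E b T : ℝ) (u : ℂ) (hE : 0 < E) (hT : 0 < T)
    (hre : |u.re| = T) (him : u.im = 0) :
    ‖∫ y in (0:ℝ)..T, Complex.exp (Complex.I * (u + y * Complex.I) * E)
        / ((u + y * Complex.I) - Complex.I * b)‖ ≤ 1 / (T * E) := by
  have hden : ∀ y : ℝ, (T:ℝ) ≤ ‖(u + y * Complex.I) - Complex.I * b‖ := by
    intro y
    calc (T:ℝ) = |((u + y * Complex.I) - Complex.I * (b:ℂ)).re| := by
          simp [Complex.sub_re, Complex.add_re, hre]
      _ ≤ _ := Complex.abs_re_le_norm _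
  have hdne : ∀ y : ℝ, (u + y * Complex.I) - Complex.I * b ≠ 0 := by
    intro y
    apply ne_zero_of_re_ne
    intro h0
    rw [show ((u + ↑y * Complex.I) - Complex.I * ↑b).re = u.re by simp] at h0
    rw [h0] at hre; simp at hre; linarith
  have hnorm : ∀ y : ℝ, ‖Complex.exp (Complex.I * (u + y * Complex.I) * E)
      / ((u + y * Complex.I) - Complex.I * b)‖ ≤ Real.exp (-y*E) / T := by
    intro y
    rw [norm_div, Complex.norm_exp]
    have hre2 : (Complex.I * (u + y * Complex.I) * E).re = -y*E := by
      simp [Complex.mul_re, Complex.mul_im, him]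
    rw [hre2]
    exact div_le_div_of_nonneg_left (Real.exp_pos _).le hT (hden y)
  calc ‖_‖ ≤ ∫ y in (0:ℝ)..T, Real.exp (-y*E) / T :=
        le_trans (intervalIntegral.norm_integral_le_integral_norm hT.le) ?_
    _ ≤ 1/(T*E) := ?_
  · apply intervalIntegral.integral_mono_on hT.le ?_ ?_ (fun y _ => hnorm y)
    · apply Continuous.intervalIntegrable
      apply Continuous.norm
      exact Continuous.div (by fun_prop) (by fun_prop) hdne
    · apply Continuous.intervalIntegrable; fun_prop
  · have hftc : ∫ y in (0:ℝ)..T, Real.exp (-y*E) / T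
        = (-Real.exp (-T*E)/(E*T)) - (-Real.exp (-0*E)/(E*T)) := by
      apply intervalIntegral.integral_eq_sub_of_hasDerivAt
        (f := fun y : ℝ => -Real.exp (-y*E)/(E*T))
      · intro y hy
        have : HasDerivAt (fun y : ℝ => -Real.exp (-y*E)/(E*T)) (Real.exp (-y*E)/T) y := by
          have h1 : HasDerivAt (fun y : ℝ => -y*E) (-E) y := by
            simpa using (hasDerivAt_id y).neg.mul_const E
          have h2 := (Real.hasDerivAt_exp (-y*E)).comp y h1
          have h3 := (h2.neg).div_const (E*T)
          refine h3.congr_deriv ?_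
          rw [mul_neg, neg_neg, mul_comm E T, mul_div_mul_right _ _ hE.ne']
        exact this
      · apply Continuous.intervalIntegrable; fun_prop
    rw [hftc]
    have hpos : (0:ℝ) < E*T := by positivity
    have h9 : -Real.exp (-T*E)/(E*T) - -Real.exp (-0*E)/(E*T) = (1 - Real.exp (-T*E))/(E*T) := by
      norm_num; ring
    rw [h9, show (1:ℝ)/(T*E) = 1/(E*T) by ring]
    exact (div_le_div_iff_of_pos_right hpos).2 (by nlinarith [Real.exp_pos (-T*E)])


lemma top_bound (E b T : ℝ) (hE : 0 < E) (hbT : 0 < T - b) (hT : 0 < T) :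
    ‖∫ x in (-T)..T, Complex.exp (Complex.I * ((x : ℂ) + T * Complex.I) * E)
        / (((x : ℂ) + T * Complex.I) - Complex.I * b)‖
      ≤ Real.exp (-T*E) / (T - b) * (2*T) := by
  have h := intervalIntegral.norm_integral_le_of_norm_le_const
    (C := Real.exp (-T*E) / (T - b))
    (f := fun x : ℝ => Complex.exp (Complex.I * ((x : ℂ) + T * Complex.I) * E)
        / (((x : ℂ) + T * Complex.I) - Complex.I * b)) (a := -T) (b := T) ?_
  · calc ‖_‖ ≤ Real.exp (-T*E) / (T - b) * |T - -T| := h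
      _ = Real.exp (-T*E) / (T - b) * (2*T) := by
        rw [show (T - -T) = 2*T by ring, abs_of_pos (by linarith)]
  · intro x hx
    have hden : T - b ≤ ‖((x : ℂ) + T * Complex.I) - Complex.I * b‖ := by
      calc T - b = |(((x : ℂ) + T * Complex.I) - Complex.I * (b:ℂ)).im| := by
            simp; rw [abs_of_pos hbT]
        _ ≤ _ := Complex.abs_im_le_norm _
    rw [norm_div, Complex.norm_exp]
    have hre2 : (Complex.I * ((x:ℂ) + T * Complex.I) * E).re = -T*E := by
      simp [Complex.mul_re, Complex.mul_im]
    rw [hre2]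
    exact div_le_div_of_nonneg_left (Real.exp_pos _).le hbT hden


lemma G_close (γ b : ℝ) (hγ : 0 < γ) (hb : 0 < b) (E T : ℝ) (hE : γ ≤ E) (hT : b + 1 ≤ T) :
    ‖(∫ t in (-T)..T, Complex.exp (Complex.I * t * E) / ((t : ℂ) - Complex.I * b))
        - 2 * Real.pi * Complex.I * Complex.exp (Complex.I * (Complex.I * b) * E)‖
      ≤ Real.exp (-T*γ) / (T - b) * (2*T) + 2/(T*γ) := by
  have hT0 : 0 < T := by linarith
  have hbT : b < T := by linarith
  have hE0 : 0 < E := lt_of_lt_of_le hγ hE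
  rw [G_eq E b T hb hbT, add_sub_cancel_left]
  have h1 := top_bound E b T hE0 (by linarith) hT0
  have h2 := vert_bound E b T (T:ℂ) hE0 hT0 (by simp [abs_of_pos hT0]) (by simp)
  have h3 := vert_bound E b T (-(T:ℂ)) hE0 hT0 (by simp [abs_of_pos hT0]) (by simp)
  have hA : ‖∫ x in (-T)..T, Complex.exp (Complex.I * ((x : ℂ) + T * Complex.I) * E)
        / (((x : ℂ) + T * Complex.I) - Complex.I * b)‖ ≤ Real.exp (-T*γ) / (T - b) * (2*T) := by
    refine h1.trans ?_
    have hee : Real.exp (-T*E) ≤ Real.exp (-T*γ) := Real.exp_le_exp.2 (by nlinarith)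
    exact mul_le_mul_of_nonneg_right
      ((div_le_div_iff_of_pos_right (by linarith)).2 hee) (by linarith)
  have hR : ‖∫ y in (0:ℝ)..T, Complex.exp (Complex.I * ((T:ℂ) + y * Complex.I) * E)
        / (((T:ℂ) + y * Complex.I) - Complex.I * b)‖ ≤ 1/(T*γ) := by
    refine h2.trans ?_
    gcongr
  have hL : ‖∫ y in (0:ℝ)..T, Complex.exp (Complex.I * (-(T:ℂ) + y * Complex.I) * E)
        / ((-(T:ℂ) + y * Complex.I) - Complex.I * b)‖ ≤ 1/(T*γ) := by
    refine h3.trans ?_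
    gcongr
  have hR' : ‖Complex.I * ∫ y in (0:ℝ)..T, Complex.exp (Complex.I * ((T:ℂ) + y * Complex.I) * E)
        / (((T:ℂ) + y * Complex.I) - Complex.I * b)‖ ≤ 1/(T*γ) := by
    rw [norm_mul, Complex.norm_I, one_mul]; exact hR
  have hL' : ‖Complex.I * ∫ y in (0:ℝ)..T, Complex.exp (Complex.I * (-(T:ℂ) + y * Complex.I) * E)
        / ((-(T:ℂ) + y * Complex.I) - Complex.I * b)‖ ≤ 1/(T*γ) := by
    rw [norm_mul, Complex.norm_I, one_mul]; exact hL
  refine le_trans (le_trans (norm_add_le _ _) (add_le_add (norm_sub_le _ _) le_rfl)) ?_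
  refine le_trans (add_le_add (add_le_add hA hR') hL') (le_of_eq ?_)
  ring

lemma err_tendsto (γ b : ℝ) (hγ : 0 < γ) (hb : 0 < b) :
    Tendsto (fun T : ℝ => Real.exp (-T*γ) / (T - b) * (2*T) + 2/(T*γ)) atTop (𝓝 0) := by
  have h1 : Tendsto (fun T : ℝ => Real.exp (-T*γ)) atTop (𝓝 0) := by
    have hmul : Tendsto (fun T : ℝ => T * γ) atTop atTop := tendsto_id.atTop_mul_const hγ
    exact (Real.tendsto_exp_neg_atTop_nhds_zero.comp hmul).congr
      (fun T => by simp [Function.comp, neg_mul])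
  have h2 : Tendsto (fun T : ℝ => (2*T) / (T - b)) atTop (𝓝 2) := by
    have hnum : Tendsto (fun T : ℝ => (2:ℝ) / (1 - b/T)) atTop (𝓝 2) := by
      have hb0 : Tendsto (fun T : ℝ => 1 - b/T) atTop (𝓝 1) := by
        simpa using (tendsto_const_nhds : Tendsto (fun _:ℝ => (1:ℝ)) atTop (𝓝 1)).sub
          ((tendsto_const_nhds : Tendsto (fun _:ℝ => (b:ℝ)) atTop (𝓝 b)).div_atTop tendsto_id)
      have h := (tendsto_const_nhds : Tendsto (fun _:ℝ => (2:ℝ)) atTop (𝓝 2)).div hb0 one_ne_zero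
      rw [div_one] at h; exact h
    refine hnum.congr' ?_
    filter_upwards [eventually_gt_atTop (max b 0)] with T hT
    have hT0 : 0 < T := lt_of_le_of_lt (le_max_right b 0) hT
    have hTb : b < T := lt_of_le_of_lt (le_max_left b 0) hT
    field_simp
  have h3 : Tendsto (fun T : ℝ => Real.exp (-T*γ) / (T - b) * (2*T)) atTop (𝓝 0) := by
    have h5 := h1.mul h2
    rw [zero_mul] at h5
    exact h5.congr (fun T => by ring)
  have h4 : Tendsto (fun T : ℝ => 2/(T*γ)) atTop (𝓝 0) :=
    (tendsto_const_nhds : Tendsto (fun _:ℝ => (2:ℝ)) atTop (𝓝 2)).div_atTop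
      (tendsto_id.atTop_mul_const hγ)
  simpa using h3.add h4

lemma G_tendsto (γ b E : ℝ) (hγ : 0 < γ) (hb : 0 < b) (hE : γ ≤ E) :
    Tendsto (fun T : ℝ => ∫ t in (-T)..T,
        Complex.exp (Complex.I * t * E) / ((t : ℂ) - Complex.I * b)) atTop
      (𝓝 (2 * Real.pi * Complex.I * Complex.exp (Complex.I * (Complex.I * b) * E))) := by
  rw [tendsto_iff_norm_sub_tendsto_zero]
  apply squeeze_zero' (Eventually.of_forall fun T => norm_nonneg _)
  · filter_upwards [eventually_ge_atTop (b+1)] with T hT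
    exact G_close γ b hγ hb E T hE hT
  · exact err_tendsto γ b hγ hb

lemma G_unif (γ b : ℝ) (hγ : 0 < γ) (hb : 0 < b) (E T : ℝ) (hE : γ ≤ E) (hT : b + 1 ≤ T) :
    ‖∫ t in (-T)..T, Complex.exp (Complex.I * t * E) / ((t : ℂ) - Complex.I * b)‖
      ≤ 2*Real.pi + 4/γ := by
  have hc := G_close γ b hγ hb E T hE hT
  have hE0 : 0 < E := lt_of_lt_of_le hγ hE
  have hT1 : 1 ≤ T := by linarith
  have hL : ‖2 * (Real.pi:ℂ) * Complex.I * Complex.exp (Complex.I * (Complex.I * b) * E)‖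
      ≤ 2*Real.pi := by
    have hre : (Complex.I * (Complex.I * b) * E).re = -(b*E) := by
      simp [Complex.mul_re, Complex.mul_im]
    have heq : ‖2 * (Real.pi:ℂ) * Complex.I * Complex.exp (Complex.I * (Complex.I * b) * E)‖
        = 2 * Real.pi * Real.exp (-(b*E)) := by
      rw [norm_mul, norm_mul, norm_mul, Complex.norm_I,
        show ‖(2:ℂ)‖ = 2 from by norm_num, Complex.norm_real, Real.norm_eq_abs,
        abs_of_pos Real.pi_pos, show ‖Complex.exp (Complex.I * (Complex.I * b) * E)‖
          = Real.exp (-(b*E)) from by rw [Complex.norm_exp, hre]]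
      ring
    rw [heq]
    have h1 : Real.exp (-(b*E)) ≤ 1 := Real.exp_le_one_iff.2 (by nlinarith)
    nlinarith [Real.pi_pos, Real.exp_pos (-(b*E))]
  have e1 : (0:ℝ) < Real.exp (-T*γ) := Real.exp_pos _
  have e2 : Real.exp (-T*γ) * (T*γ) ≤ 1 := by
    rw [show -T*γ = -(T*γ) by ring, Real.exp_neg, inv_mul_le_iff₀ (Real.exp_pos _)]
    have := Real.add_one_le_exp (T*γ)
    linarith
  have h6 : Real.exp (-T*γ)/(T-b) ≤ Real.exp (-T*γ) := div_le_self e1.le (by linarith)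
  have hfirst : Real.exp (-T*γ)/(T-b)*(2*T) ≤ 2/γ := by
    rw [le_div_iff₀ hγ]
    have h7 := mul_le_mul_of_nonneg_right h6 (show (0:ℝ) ≤ 2*T*γ by positivity)
    nlinarith [e2]
  have hsecond : 2/(T*γ) ≤ 2/γ :=
    div_le_div_of_nonneg_left (by norm_num) hγ (by nlinarith)
  calc ‖∫ t in (-T)..T, Complex.exp (Complex.I * t * E) / ((t : ℂ) - Complex.I * b)‖
      = ‖((∫ t in (-T)..T, Complex.exp (Complex.I * t * E) / ((t : ℂ) - Complex.I * b))
          - 2 * Real.pi * Complex.I * Complex.exp (Complex.I * (Complex.I * b) * E))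
        + 2 * Real.pi * Complex.I * Complex.exp (Complex.I * (Complex.I * b) * E)‖ := by
        rw [sub_add_cancel]
    _ ≤ _ := norm_add_le _ _
    _ ≤ (Real.exp (-T*γ) / (T - b) * (2*T) + 2/(T*γ)) + 2*Real.pi := add_le_add hc hL
    _ ≤ 2*Real.pi + 4/γ := by
        have := add_le_add hfirst hsecond
        have h8 : 2/γ + 2/γ = 4/γ := by ring
        linarith

lemma key (γ b : ℝ) (hγ : 0 < γ) (hb : 0 < b) (ν : Measure ℝ) [IsFiniteMeasure ν]
    (hν : ν (Set.Iio γ) = 0) :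
    Tendsto (fun T : ℝ => (1 / (2 * Real.pi * Complex.I)) *
        ∫ t in (-T)..T, (∫ E, Complex.exp (Complex.I * t * E) ∂ν) / ((t:ℂ) - Complex.I * b))
      atTop (𝓝 (∫ E, Complex.exp (Complex.I * (Complex.I * b) * E) ∂ν)) := by
  have hae : ∀ᵐ E ∂ν, γ ≤ E := by
    rw [ae_iff]
    have hset : {E : ℝ | ¬ γ ≤ E} = Set.Iio γ := by ext x; simp [not_le]
    rw [hset]; exact hν
  have hden : ∀ t : ℝ, (t:ℂ) - Complex.I * b ≠ 0 := by
    intro t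
    apply ne_zero_of_im_ne
    simp [Complex.sub_im, Complex.mul_im]
    exact hb.ne'
  have hnorm1 : ∀ t E : ℝ, ‖Complex.exp (Complex.I * t * E) / ((t:ℂ) - Complex.I * b)‖ ≤ 1/b := by
    intro t E
    rw [norm_div, Complex.norm_exp]
    have h1 : (Complex.I * t * E).re = 0 := by simp [Complex.mul_re, Complex.mul_im]
    rw [h1, Real.exp_zero]
    have h2 : b ≤ ‖(t:ℂ) - Complex.I * b‖ := by
      calc b = |((t:ℂ) - Complex.I * (b:ℂ)).im| := by
            simp [Complex.sub_im, Complex.mul_im, abs_of_pos hb]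
        _ ≤ _ := Complex.abs_im_le_norm _
    exact div_le_div_of_nonneg_left zero_le_one hb h2
  have hΦ : Tendsto (fun T : ℝ => ∫ E, (∫ t in (-T)..T,
        Complex.exp (Complex.I * t * E) / ((t:ℂ) - Complex.I * b)) ∂ν) atTop
      (𝓝 (∫ E, 2 * Real.pi * Complex.I * Complex.exp (Complex.I * (Complex.I * b) * E) ∂ν)) := by
    apply MeasureTheory.tendsto_integral_filter_of_dominated_convergence
      (bound := fun _ => 2*Real.pi + 4/γ)
    · filter_upwards [eventually_gt_atTop (0:ℝ)] with T hT
      apply Continuous.aestronglyMeasurable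
      have heq : (fun E : ℝ => ∫ t in (-T)..T,
            Complex.exp (Complex.I * t * E) / ((t:ℂ) - Complex.I * b))
          = fun E : ℝ => ∫ t in Set.Ioc (-T) T,
            Complex.exp (Complex.I * t * E) / ((t:ℂ) - Complex.I * b) := by
        funext E; rw [intervalIntegral.integral_of_le (by linarith)]
      rw [heq]
      haveI : IsFiniteMeasure (volume.restrict (Set.Ioc (-T) T)) := by
        constructor
        rw [Measure.restrict_apply_univ]
        exact measure_Ioc_lt_top
      apply continuous_of_dominated (bound := fun _ => 1/b)
      · intro E
        apply Continuous.aestronglyMeasurable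
        exact Continuous.div (by fun_prop) (by fun_prop) (fun t => hden t)
      · intro E
        exact Eventually.of_forall fun t => hnorm1 t E
      · exact integrable_const _
      · exact Eventually.of_forall fun t => by fun_prop
    · filter_upwards [eventually_ge_atTop (b+1)] with T hT
      filter_upwards [hae] with E hE
      exact G_unif γ b hγ hb E T hE hT
    · exact integrable_const _
    · filter_upwards [hae] with E hE
      exact G_tendsto γ b E hγ hb hE
  have hswap : ∀ T : ℝ, 0 < T →
      (∫ t in (-T)..T, (∫ E, Complex.exp (Complex.I * t * E) ∂ν) / ((t:ℂ) - Complex.I * b))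
      = ∫ E, (∫ t in (-T)..T,
          Complex.exp (Complex.I * t * E) / ((t:ℂ) - Complex.I * b)) ∂ν := by
    intro T hT
    have hle : (-T) ≤ T := by linarith
    have h1 : ∀ t : ℝ, (∫ E, Complex.exp (Complex.I * t * E) ∂ν) / ((t:ℂ) - Complex.I * b)
        = ∫ E, Complex.exp (Complex.I * t * E) / ((t:ℂ) - Complex.I * b) ∂ν := by
      intro t; rw [MeasureTheory.integral_div]
    simp_rw [h1, intervalIntegral.integral_of_le hle]
    haveI : IsFiniteMeasure (volume.restrict (Set.Ioc (-T) T)) := by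
      constructor
      rw [Measure.restrict_apply_univ]
      exact measure_Ioc_lt_top
    apply MeasureTheory.integral_integral_swap
    apply Integrable.mono' (g := fun _ => 1/b) (integrable_const _)
    · apply Continuous.aestronglyMeasurable
      apply Continuous.div (by fun_prop) (by fun_prop)
      exact fun p => hden p.1
    · exact Eventually.of_forall fun p => hnorm1 p.1 p.2
  have hfinal := hΦ.const_mul (1 / (2 * Real.pi * Complex.I))
  have hlim : (1 / (2 * Real.pi * Complex.I))
      * ∫ E, 2 * Real.pi * Complex.I * Complex.exp (Complex.I * (Complex.I * b) * E) ∂ν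
      = ∫ E, Complex.exp (Complex.I * (Complex.I * b) * E) ∂ν := by
    rw [MeasureTheory.integral_const_mul]
    have hne : (2 * (Real.pi:ℂ) * Complex.I) ≠ 0 := by
      simp [Complex.ext_iff, Real.pi_ne_zero]
    field_simp
  rw [← hlim]
  apply hfinal.congr'
  filter_upwards [eventually_gt_atTop (0:ℝ)] with T hT
  rw [hswap T hT]

lemma cont_num (ν : Measure ℝ) [IsFiniteMeasure ν] :
    Continuous fun t : ℝ => ∫ E, Complex.exp (Complex.I * t * E) ∂ν := by
  apply continuous_of_dominated (bound := fun _ => 1)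
  · intro t; exact Continuous.aestronglyMeasurable (by fun_prop)
  · intro t
    refine Eventually.of_forall fun E => ?_
    rw [Complex.norm_exp]
    have h1 : (Complex.I * t * E).re = 0 := by simp [Complex.mul_re, Complex.mul_im]
    rw [h1, Real.exp_zero]
  · exact integrable_const _
  · exact Eventually.of_forall fun E => by fun_prop

lemma jordan_vanish (γ : ℝ) (s : SignedMeasure ℝ)
    (hvan : ∀ S : Set ℝ, MeasurableSet S → S ⊆ Set.Iio γ → s S = 0) :
    s.toJordanDecomposition.posPart (Set.Iio γ) = 0 ∧
      s.toJordanDecomposition.negPart (Set.Iio γ) = 0 := by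
  obtain ⟨i, hi₁, hi₂, hi₃, hpos, hneg⟩ := s.toJordanDecomposition_spec
  constructor
  · rw [hpos, SignedMeasure.toMeasureOfZeroLE_apply s hi₂ hi₁ measurableSet_Iio]
    have h0 : s (i ∩ Set.Iio γ) = 0 :=
      hvan _ (hi₁.inter measurableSet_Iio) Set.inter_subset_right
    simp [h0]
  · rw [hneg, SignedMeasure.toMeasureOfLEZero_apply s hi₃ hi₁.compl measurableSet_Iio]
    have h0 : s (iᶜ ∩ Set.Iio γ) = 0 :=
      hvan _ (hi₁.compl.inter measurableSet_Iio) Set.inter_subset_right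
    simp [h0]

end ContourRep

end ContourRepHelpers

open ContourRep in
/-- **Contour representation of the correlation function (eq:fintbd).**
If `μ` is a finite complex Borel measure on `ℝ` supported in `[γ,∞)` with `γ > 0` and
`f(z) = ∫ e^{izE} dμ(E)`, then for every `b > 0`,
`lim_{T→∞} (1/(2πi)) ∫_{-T}^{T} f(t)/(t - ib) dt = f(ib)`. -/
theorem contour_representation
    (γ : ℝ) (hγ : 0 < γ)
    (μ : MeasureTheory.ComplexMeasure ℝ)
    (hsupp : ∀ S : Set ℝ, MeasurableSet S → S ∩ Set.Ici γ = ∅ → μ S = 0)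
    (b : ℝ) (hb : 0 < b) :
    Tendsto (fun T : ℝ =>
        (1 / (2 * Real.pi * Complex.I)) *
          ∫ t in (-T)..T,
            (cmIntegral μ fun E : ℝ => Complex.exp (Complex.I * t * E)) /
              ((t : ℂ) - Complex.I * b))
      atTop
      (nhds (cmIntegral μ fun E : ℝ =>
        Complex.exp (Complex.I * (Complex.I * b) * E))) := by
  have hvan : ∀ (s : MeasureTheory.SignedMeasure ℝ),
      (∀ S : Set ℝ, MeasurableSet S → S ⊆ Set.Iio γ → s S = 0) →
      s.toJordanDecomposition.posPart (Set.Iio γ) = 0 ∧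
        s.toJordanDecomposition.negPart (Set.Iio γ) = 0 := fun s h => jordan_vanish γ s h
  have hμvan : ∀ S : Set ℝ, MeasurableSet S → S ⊆ Set.Iio γ → μ S = 0 := by
    intro S hS hsub
    apply hsupp S hS
    rw [Set.eq_empty_iff_forall_notMem]
    rintro x ⟨hx1, hx2⟩
    exact absurd (Set.mem_Ici.mp hx2) (not_le.2 (Set.mem_Iio.mp (hsub hx1)))
  have hre : ∀ S : Set ℝ, MeasurableSet S → S ⊆ Set.Iio γ →
      (MeasureTheory.ComplexMeasure.re μ) S = 0 := by
    intro S hS hsub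
    rw [MeasureTheory.ComplexMeasure.re_apply]
    show Complex.re (μ S) = 0
    rw [hμvan S hS hsub]
    rfl
  have him : ∀ S : Set ℝ, MeasurableSet S → S ⊆ Set.Iio γ →
      (MeasureTheory.ComplexMeasure.im μ) S = 0 := by
    intro S hS hsub
    rw [MeasureTheory.ComplexMeasure.im_apply]
    show Complex.im (μ S) = 0
    rw [hμvan S hS hsub]
    rfl
  obtain ⟨h1, h2⟩ := hvan _ hre
  obtain ⟨h3, h4⟩ := hvan _ him
  set ν₁ := (MeasureTheory.ComplexMeasure.re μ).toJordanDecomposition.posPart with hn1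
  set ν₂ := (MeasureTheory.ComplexMeasure.re μ).toJordanDecomposition.negPart with hn2
  set ν₃ := (MeasureTheory.ComplexMeasure.im μ).toJordanDecomposition.posPart with hn3
  set ν₄ := (MeasureTheory.ComplexMeasure.im μ).toJordanDecomposition.negPart with hn4
  have k₁ := ContourRep.key γ b hγ hb ν₁ h1
  have k₂ := ContourRep.key γ b hγ hb ν₂ h2
  have k₃ := ContourRep.key γ b hγ hb ν₃ h3
  have k₄ := ContourRep.key γ b hγ hb ν₄ h4
  have hcomb := (k₁.sub k₂).add ((k₃.sub k₄).const_mul Complex.I)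
  have hden : ∀ t : ℝ, (t:ℂ) - Complex.I * b ≠ 0 := by
    intro t
    apply ne_zero_of_im_ne
    simp [Complex.sub_im, Complex.mul_im]
    exact hb.ne'
  have hval : (cmIntegral μ fun E : ℝ => Complex.exp (Complex.I * (Complex.I * b) * E))
      = ((∫ E, Complex.exp (Complex.I * (Complex.I * b) * E) ∂ν₁)
          - ∫ E, Complex.exp (Complex.I * (Complex.I * b) * E) ∂ν₂)
        + Complex.I * ((∫ E, Complex.exp (Complex.I * (Complex.I * b) * E) ∂ν₃)
          - ∫ E, Complex.exp (Complex.I * (Complex.I * b) * E) ∂ν₄) := by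
    show ((∫ E, Complex.exp (Complex.I * (Complex.I * b) * E) ∂ν₁)
          - ∫ E, Complex.exp (Complex.I * (Complex.I * b) * E) ∂ν₂)
        + Complex.I • ((∫ E, Complex.exp (Complex.I * (Complex.I * b) * E) ∂ν₃)
          - ∫ E, Complex.exp (Complex.I * (Complex.I * b) * E) ∂ν₄) = _
    rw [smul_eq_mul]
  have hfun : ∀ T : ℝ,
      (1 / (2 * Real.pi * Complex.I)) *
          ∫ t in (-T)..T,
            (cmIntegral μ fun E : ℝ => Complex.exp (Complex.I * t * E)) /
              ((t : ℂ) - Complex.I * b)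
      = ((1 / (2 * Real.pi * Complex.I)) *
            (∫ t in (-T)..T, (∫ E, Complex.exp (Complex.I * t * E) ∂ν₁) / ((t:ℂ) - Complex.I * b))
          - (1 / (2 * Real.pi * Complex.I)) *
            (∫ t in (-T)..T, (∫ E, Complex.exp (Complex.I * t * E) ∂ν₂) / ((t:ℂ) - Complex.I * b)))
        + Complex.I * ((1 / (2 * Real.pi * Complex.I)) *
            (∫ t in (-T)..T, (∫ E, Complex.exp (Complex.I * t * E) ∂ν₃) / ((t:ℂ) - Complex.I * b))
          - (1 / (2 * Real.pi * Complex.I)) *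
            (∫ t in (-T)..T, (∫ E, Complex.exp (Complex.I * t * E) ∂ν₄) / ((t:ℂ) - Complex.I * b))) := by
    intro T
    have hInt : ∀ (ν : Measure ℝ) [IsFiniteMeasure ν], IntervalIntegrable
        (fun t : ℝ => (∫ E, Complex.exp (Complex.I * t * E) ∂ν) / ((t:ℂ) - Complex.I * b))
        MeasureTheory.volume (-T) T := by
      intro ν _
      apply Continuous.intervalIntegrable
      exact Continuous.div (cont_num ν) (by fun_prop) hden
    have hsplit : (fun t : ℝ =>
        (cmIntegral μ fun E : ℝ => Complex.exp (Complex.I * t * E)) / ((t:ℂ) - Complex.I * b))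
        = fun t : ℝ =>
          ((∫ E, Complex.exp (Complex.I * t * E) ∂ν₁) / ((t:ℂ) - Complex.I * b)
            - (∫ E, Complex.exp (Complex.I * t * E) ∂ν₂) / ((t:ℂ) - Complex.I * b))
          + Complex.I * ((∫ E, Complex.exp (Complex.I * t * E) ∂ν₃) / ((t:ℂ) - Complex.I * b)
            - (∫ E, Complex.exp (Complex.I * t * E) ∂ν₄) / ((t:ℂ) - Complex.I * b)) := by
      funext t
      show (((∫ E, Complex.exp (Complex.I * t * E) ∂ν₁)
          - (∫ E, Complex.exp (Complex.I * t * E) ∂ν₂))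
        + Complex.I • ((∫ E, Complex.exp (Complex.I * t * E) ∂ν₃)
          - (∫ E, Complex.exp (Complex.I * t * E) ∂ν₄))) / ((t:ℂ) - Complex.I * b) = _
      rw [smul_eq_mul]
      ring
    rw [hsplit]
    rw [intervalIntegral.integral_add ((hInt ν₁).sub (hInt ν₂))
      (((hInt ν₃).sub (hInt ν₄)).const_mul Complex.I),
      intervalIntegral.integral_sub (hInt ν₁) (hInt ν₂),
      intervalIntegral.integral_const_mul,
      intervalIntegral.integral_sub (hInt ν₃) (hInt ν₄)]
    ring
  rw [hval]
  exact Tendsto.congr (fun T => (hfun T).symm) hcomb
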